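/- Let M ≤ N, K = N − M. Let Q be an N×N real orthogonal matrix written as Q = [Q1 | Q2] with Q1 of size N×M and Q2 of size N×K, and let S be an invertible M×M real matrix. Suppose ν = S ⬝ Q1ᵀ (this arises from a QR decomposition νᵀ = Q1 Sᵀ of the transpose of a full-row-rank M×N matrix ν). Then for every N×M real matrix R, |det(S)| · |det([R | Q2])| = |det(ν ⬝ R)|; equivalently, |det([R | Q2])| = |det(ν ⬝ R)| / |det(S)|. -/

import Mathlib

open Matrix

/-- The square `N × N` matrix obtained by placing the columns of an `N × M` matrix `X`
before the columns of an `N × K` matrix `Y`, given `M + K = N`. -/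
noncomputable def catCols {N M K : ℕ} (h : M + K = N)
    (X : Matrix (Fin N) (Fin M) ℝ) (Y : Matrix (Fin N) (Fin K) ℝ) :
    Matrix (Fin N) (Fin N) ℝ :=
  (Matrix.fromCols X Y).submatrix id (fun j => finSumFinEquiv.symm (Fin.cast h.symm j))

lemma catCols_eq {N M K : ℕ} (h : M + K = N)
    (X : Matrix (Fin N) (Fin M) ℝ) (Y : Matrix (Fin N) (Fin K) ℝ) :
    catCols h X Y = (Matrix.fromCols X Y).submatrix id
      ⇑((finCongr h.symm).trans finSumFinEquiv.symm) := rfl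

lemma key_prod {N M K : ℕ} (h : M + K = N)
    (X X' : Matrix (Fin N) (Fin M) ℝ) (Y Y' : Matrix (Fin N) (Fin K) ℝ) :
    (catCols h X Y)ᵀ * catCols h X' Y' =
      (Matrix.fromBlocks (Xᵀ * X') (Xᵀ * Y') (Yᵀ * X') (Yᵀ * Y')).submatrix
        ⇑((finCongr h.symm).trans finSumFinEquiv.symm)
        ⇑((finCongr h.symm).trans finSumFinEquiv.symm) := by
  set e := (finCongr h.symm).trans finSumFinEquiv.symm
  rw [catCols_eq, catCols_eq, transpose_submatrix, transpose_fromCols]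
  have := Matrix.submatrix_mul_equiv (Matrix.fromRows Xᵀ Yᵀ) (Matrix.fromCols X' Y')
    ⇑e (Equiv.refl (Fin N)) ⇑e
  simp only [Equiv.coe_refl] at this
  rw [this, Matrix.fromRows_mul_fromCols]

/-- if `Q = [Q1 | Q2]` is orthogonal, `S` is invertible and `ν = S * Q1ᵀ`,
then for every `N × M` matrix `R` one has `|det S| * |det [R | Q2]| = |det (ν * R)|`. -/
theorem statement1 {M N K : ℕ} (hK : M + K = N)
    (Q1 : Matrix (Fin N) (Fin M) ℝ) (Q2 : Matrix (Fin N) (Fin K) ℝ)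
    (hQ : (catCols hK Q1 Q2)ᵀ * (catCols hK Q1 Q2) = 1)
    (S : Matrix (Fin M) (Fin M) ℝ) (hS : IsUnit S.det)
    (ν : Matrix (Fin M) (Fin N) ℝ) (hν : ν = S * Q1ᵀ)
    (R : Matrix (Fin N) (Fin M) ℝ) :
    |S.det| * |(catCols hK R Q2).det| = |(ν * R).det| := by
  set e := (finCongr hK.symm).trans finSumFinEquiv.symm with he
  -- orthogonality in block form
  have hblocks : Matrix.fromBlocks (Q1ᵀ * Q1) (Q1ᵀ * Q2) (Q2ᵀ * Q1) (Q2ᵀ * Q2)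
      = (1 : Matrix (Fin M ⊕ Fin K) (Fin M ⊕ Fin K) ℝ) := by
    have h1 := hQ
    rw [key_prod] at h1
    have h2 : (Matrix.fromBlocks (Q1ᵀ * Q1) (Q1ᵀ * Q2) (Q2ᵀ * Q1) (Q2ᵀ * Q2)).submatrix
        (⇑e ∘ ⇑e.symm) (⇑e ∘ ⇑e.symm)
        = (1 : Matrix (Fin N) (Fin N) ℝ).submatrix ⇑e.symm ⇑e.symm := by
      rw [← Matrix.submatrix_submatrix, h1]
    rwa [Equiv.self_comp_symm, Matrix.submatrix_id_id, Matrix.submatrix_one_equiv] at h2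
  have h12 : Q1ᵀ * Q2 = 0 := by
    have := congrArg Matrix.toBlocks₁₂ hblocks
    rw [Matrix.toBlocks_fromBlocks₁₂] at this
    rw [this]
    ext i j
    simp [Matrix.toBlocks₁₂, Matrix.one_apply]
  have h22 : Q2ᵀ * Q2 = 1 := by
    have := congrArg Matrix.toBlocks₂₂ hblocks
    rw [Matrix.toBlocks_fromBlocks₂₂] at this
    rw [this]
    ext i j
    simp [Matrix.toBlocks₂₂, Matrix.one_apply]
  -- |det Q| = 1
  have hdetQ : |(catCols hK Q1 Q2).det| = 1 := by
    have := congrArg Matrix.det hQ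
    rw [Matrix.det_mul, Matrix.det_transpose, Matrix.det_one] at this
    have habs : |(catCols hK Q1 Q2).det| ^ 2 = 1 := by
      rw [sq_abs, sq, this]
    nlinarith [abs_nonneg (catCols hK Q1 Q2).det]
  -- det of the product Qᵀ * [R | Q2]
  have hprod : (catCols hK Q1 Q2)ᵀ.det * (catCols hK R Q2).det = (Q1ᵀ * R).det := by
    rw [← Matrix.det_mul, key_prod, Matrix.det_submatrix_equiv_self, h12, h22,
      Matrix.det_fromBlocks_zero₁₂, Matrix.det_one, mul_one]
  have hd : |(catCols hK R Q2).det| = |(Q1ᵀ * R).det| := by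
    have := congrArg abs hprod
    rwa [abs_mul, Matrix.det_transpose, hdetQ, one_mul] at this
  rw [hd, hν, Matrix.mul_assoc, Matrix.det_mul, abs_mul]
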